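/- For every RS-game (N₀, v), the mgpc-solution is a core allocation, ξ(v) ∈ Core(N₀, v), and it assigns a positive payoff to the supplier: ξ_0(v) = n·β > 0. -/
import Mathlib


open Finset

/-- An RS-situation with `n` retailers; the supplier is treated separately.
`c` is the unit production cost, `w` the wholesale price function and
`p i` the expected price function of retailer `i`.  All price functions are
decreasing and continuous on `[0, ∞)`, `w` exceeds `c` everywhere,
`p i 0 > w 0` and `p i` reaches the value `c` at some positive quantity. -/
structure RSSituation (n : ℕ) where
  c : ℝ
  w : ℝ → ℝ
  p : Fin n → ℝ → ℝ
  w_anti : ∀ ⦃q q' : ℝ⦄, 0 ≤ q → q ≤ q' → w q' ≤ w q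
  w_cont : ContinuousOn w (Set.Ici 0)
  w_gt_c : ∀ q : ℝ, 0 ≤ q → c < w q
  p_anti : ∀ i : Fin n, ∀ ⦃q q' : ℝ⦄, 0 ≤ q → q ≤ q' → p i q' ≤ p i q
  p_cont : ∀ i : Fin n, ContinuousOn (p i) (Set.Ici 0)
  p_zero_gt : ∀ i : Fin n, w 0 < p i 0
  exists_eq_c : ∀ i : Fin n, ∃ q : ℝ, 0 < q ∧ p i q = c

namespace RSSituation

variable {n : ℕ}

/-- The feasible set `Q^S ⊆ [0,∞)^S` of order vectors for a coalition `S` of retailers. -/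
def QSet (R : RSSituation n) (S : Finset (Fin n)) : Set (S → ℝ) :=
  {q | ∀ i : S, 0 ≤ q i ∧ R.w (∑ j : S, q j) ≤ R.p i.1 (q i)}

/-- The joint profit `∑_{i ∈ S} (p_i(q_i) - w(q_S)) q_i` of a coalition `S` of retailers. -/
def coalProfit (R : RSSituation n) (S : Finset (Fin n)) (q : S → ℝ) : ℝ :=
  ∑ i : S, (R.p i.1 (q i) - R.w (∑ j : S, q j)) * q i

/-- `q` is an optimal order vector for the coalition `S` of retailers. -/
def IsCoalOpt (R : RSSituation n) (S : Finset (Fin n)) (q : S → ℝ) : Prop :=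
  q ∈ R.QSet S ∧ ∀ q' ∈ R.QSet S, R.coalProfit S q' ≤ R.coalProfit S q

/-- The feasible set of order quantities of retailer `i` at unit price `c`. -/
def QcSet (R : RSSituation n) (i : Fin n) : Set ℝ :=
  {q | 0 ≤ q ∧ R.c ≤ R.p i q}

/-- The profit `(p_i(q) - c) q` of retailer `i` at unit price `c`. -/
def indProfit (R : RSSituation n) (i : Fin n) (q : ℝ) : ℝ :=
  (R.p i q - R.c) * q

/-- `q` is an optimal order quantity for retailer `i` at unit price `c`. -/
def IsIndOpt (R : RSSituation n) (i : Fin n) (q : ℝ) : Prop :=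
  q ∈ R.QcSet i ∧ ∀ q' ∈ R.QcSet i, R.indProfit i q' ≤ R.indProfit i q

/-- `v` is the RS-game determined by chosen optimal order vectors `qS S`
(for each retailer coalition `S`) and `qc i` (for each retailer `i`, when
cooperating with the supplier).  Players: `none` is the supplier `0`,
`some i` is retailer `i`. -/
def IsRSGame (R : RSSituation n) (qS : (S : Finset (Fin n)) → (S → ℝ))
    (qc : Fin n → ℝ) (v : Finset (Option (Fin n)) → ℝ) : Prop :=
  v ∅ = 0 ∧ v {none} = 0 ∧
    (∀ S : Finset (Fin n), S.Nonempty → v (S.image some) = R.coalProfit S (qS S)) ∧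
    (∀ S : Finset (Fin n), S.Nonempty →
      v (insert none (S.image some)) = ∑ i ∈ S, R.indProfit i (qc i))

/-- The core of a TU game on the player set `N₀ = Option (Fin n)`. -/
def core (v : Finset (Option (Fin n)) → ℝ) : Set (Option (Fin n) → ℝ) :=
  {x | ∑ i : Option (Fin n), x i = v Finset.univ ∧
    ∀ T : Finset (Option (Fin n)), v T ≤ ∑ i ∈ T, x i}

end RSSituation


namespace RSSituation

variable {n : ℕ}

/-- Each retailer's optimal individual profit at unit price `c` is positive. -/
lemma indOpt_pos (R : RSSituation n) (i : Fin n) {q0 : ℝ}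
    (h : R.IsIndOpt i q0) : 0 < R.indProfit i q0 := by
  have hc0 : R.c < R.p i 0 := lt_trans (R.w_gt_c 0 le_rfl) (R.p_zero_gt i)
  have hcont : ContinuousWithinAt (R.p i) (Set.Ici 0) 0 :=
    R.p_cont i 0 (by simp)
  have hev : ∀ᶠ x in nhdsWithin 0 (Set.Ici 0), R.c < R.p i x :=
    hcont.eventually (eventually_gt_nhds hc0)
  have hev' : ∀ᶠ x in nhdsWithin 0 (Set.Ioi 0), R.c < R.p i x :=
    hev.filter_mono (nhdsWithin_mono 0 Set.Ioi_subset_Ici_self)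
  obtain ⟨q, hq, hq0⟩ := (hev'.and eventually_mem_nhdsWithin).exists
  have hmem : q ∈ R.QcSet i := ⟨le_of_lt hq0, le_of_lt hq⟩
  have hle := h.2 q hmem
  have hpos : 0 < R.indProfit i q := mul_pos (sub_pos.2 hq) hq0
  linarith

/-- The coalitional profit of a retailer coalition is strictly less than the
sum of the individual profits its members can obtain with the supplier. -/
lemma coal_lt_ind (R : RSSituation n) (S : Finset (Fin n)) (hS : S.Nonempty)
    (q : S → ℝ) (hq : R.IsCoalOpt S q) (qc : Fin n → ℝ)
    (hqc : ∀ i : Fin n, R.IsIndOpt i (qc i)) :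
    R.coalProfit S q < ∑ i ∈ S, R.indProfit i (qc i) := by
  have hqnn : ∀ i : S, 0 ≤ q i := fun i => (hq.1 i).1
  set Qs : ℝ := ∑ j : S, q j with hQs
  have hsumnn : 0 ≤ Qs := Finset.sum_nonneg fun i _ => hqnn i
  have hwc : R.c < R.w Qs := R.w_gt_c _ hsumnn
  -- each coordinate is feasible individually
  have hfeas : ∀ i : S, q i ∈ R.QcSet i.1 := by
    intro i
    exact ⟨hqnn i, le_trans (le_of_lt hwc) ((hq.1 i).2)⟩
  have hterm : ∀ i : S, R.indProfit i.1 (q i) ≤ R.indProfit i.1 (qc i.1) :=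
    fun i => (hqc i.1).2 (q i) (hfeas i)
  have hsum_attach : ∑ i ∈ S, R.indProfit i (qc i)
      = ∑ i : S, R.indProfit i.1 (qc i.1) := by
    rw [← Finset.sum_attach S fun i => R.indProfit i (qc i), Finset.univ_eq_attach]
  have hkey : R.coalProfit S q + (R.w Qs - R.c) * Qs
      ≤ ∑ i ∈ S, R.indProfit i (qc i) := by
    rw [hsum_attach]
    have : R.coalProfit S q + (R.w Qs - R.c) * Qs
        = ∑ i : S, R.indProfit i.1 (q i) := by
      unfold coalProfit indProfit
      rw [hQs, Finset.mul_sum, ← Finset.sum_add_distrib]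
      exact Finset.sum_congr rfl fun i _ => by ring
    rw [this]
    exact Finset.sum_le_sum fun i _ => hterm i
  rcases eq_or_lt_of_le hsumnn with h0 | h0
  · -- total quantity zero: coalitional profit is zero, individual profits positive
    have hz : ∀ i : S, q i = 0 := by
      intro i
      have := (Finset.sum_eq_zero_iff_of_nonneg
        (fun i _ => hqnn i)).1 h0.symm i (Finset.mem_univ i)
      exact this
    have hcoal : R.coalProfit S q = 0 := by
      unfold coalProfit
      exact Finset.sum_eq_zero fun i _ => by rw [hz i, mul_zero]
    have hpos : 0 < ∑ i ∈ S, R.indProfit i (qc i) :=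
      Finset.sum_pos (fun i _ => R.indOpt_pos i (hqc i)) hS
    linarith
  · have : 0 < (R.w Qs - R.c) * Qs := mul_pos (sub_pos.2 hwc) h0
    linarith

end RSSituation

/-- The mgpc-solution is a core allocation and assigns a positive payoff
`n·β` to the supplier. -/
theorem rs_game_mgpc_in_core (n : ℕ) (R : RSSituation n)
    (qS : (S : Finset (Fin n)) → (S → ℝ)) (qc : Fin n → ℝ)
    (hqS : ∀ S : Finset (Fin n), S.Nonempty → R.IsCoalOpt S (qS S))
    (hqc : ∀ i : Fin n, R.IsIndOpt i (qc i))
    (v : Finset (Option (Fin n)) → ℝ) (hv : R.IsRSGame qS qc v)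
    (β : ℝ)
    (hβ_mem : ∃ S : Finset (Fin n), S.Nonempty ∧
      β = (v (insert none (S.image some)) - v (S.image some)) / (S.card : ℝ))
    (hβ_min : ∀ S : Finset (Fin n), S.Nonempty →
      β ≤ (v (insert none (S.image some)) - v (S.image some)) / (S.card : ℝ)) :
    (fun o : Option (Fin n) =>
        o.elim ((n : ℝ) * β) fun i => v {none, some i} - β) ∈
        RSSituation.core v ∧
      0 < (n : ℝ) * β := by
  classical
  obtain ⟨Sb, hSbne, hβeq⟩ := hβ_mem
  obtain ⟨i0, _⟩ := hSbne
  have hn : 0 < n := i0.pos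
  obtain ⟨hv0, hv1, hvS, hvS0⟩ := hv
  -- value of two-player coalitions {0, i}
  have hv2 : ∀ i : Fin n, v {none, some i} = R.indProfit i (qc i) := by
    intro i
    have := hvS0 {i} (Finset.singleton_nonempty i)
    simpa using this
  -- the gap v(S₀) - v(S) is positive
  have hgap : ∀ S : Finset (Fin n), S.Nonempty →
      v (S.image some) < v (insert none (S.image some)) := by
    intro S hS
    rw [hvS S hS, hvS0 S hS]
    exact R.coal_lt_ind S hS (qS S) (hqS S hS) qc hqc
  have hβpos : 0 < β := by
    rw [hβeq]
    have hc : (0:ℝ) < (Sb.card : ℝ) := by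
      exact_mod_cast Finset.card_pos.2 ⟨i0, ‹i0 ∈ Sb›⟩
    exact div_pos (sub_pos.2 (hgap Sb ⟨i0, ‹i0 ∈ Sb›⟩)) hc
  have hβle : ∀ S : Finset (Fin n), S.Nonempty →
      (S.card : ℝ) * β ≤ v (insert none (S.image some)) - v (S.image some) := by
    intro S hS
    have hc : (0:ℝ) < (S.card : ℝ) := by
      exact_mod_cast Finset.card_pos.2 hS
    have := hβ_min S hS
    calc (S.card : ℝ) * β ≤ (S.card : ℝ) *
          ((v (insert none (S.image some)) - v (S.image some)) / (S.card : ℝ)) :=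
        mul_le_mul_of_nonneg_left this (le_of_lt hc)
      _ = v (insert none (S.image some)) - v (S.image some) := by
        field_simp
  have hsum_img : ∀ (S' : Finset (Fin n)) (f : Option (Fin n) → ℝ),
      ∑ o ∈ S'.image some, f o = ∑ i ∈ S', f (some i) := by
    intro S' f
    exact Finset.sum_image (by simp)
  refine ⟨⟨?_, ?_⟩, mul_pos (by exact_mod_cast hn) hβpos⟩
  · -- efficiency
    have hNE : (Finset.univ : Finset (Fin n)).Nonempty := ⟨⟨0, hn⟩, Finset.mem_univ _⟩
    have huniv : (Finset.univ : Finset (Option (Fin n)))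
        = insert none ((Finset.univ : Finset (Fin n)).image some) := by
      ext o; cases o <;> simp
    have hR : v Finset.univ = ∑ i : Fin n, R.indProfit i (qc i) := by
      rw [huniv, hvS0 _ hNE]
    rw [hR, Fintype.sum_option]
    simp only [Option.elim, hv2]
    rw [Finset.sum_sub_distrib, Finset.sum_const, Finset.card_univ, Fintype.card_fin,
      nsmul_eq_mul]
    ring
  · -- coalition inequalities
    intro T
    set S : Finset (Fin n) := Finset.univ.filter (fun i => some i ∈ T) with hSdef
    have hmemS : ∀ i : Fin n, i ∈ S ↔ some i ∈ T := by
      intro i; simp [hSdef]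
    by_cases hnone : none ∈ T
    · have hT : T = insert none (S.image some) := by
        ext o
        cases o with
        | none => simp [hnone]
        | some a => simp [hmemS]
      have hsumT : ∑ o ∈ T, (fun o : Option (Fin n) =>
          o.elim ((n : ℝ) * β) fun i => v {none, some i} - β) o
          = (n : ℝ) * β + ∑ i ∈ S, (R.indProfit i (qc i) - β) := by
        rw [hT, Finset.sum_insert (by simp), hsum_img]
        simp only [Option.elim, hv2]
      rcases S.eq_empty_or_nonempty with hSe | hSne
      · have hTn : T = {none} := by rw [hT, hSe]; simp
        rw [hsumT, hSe, hTn, hv1]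
        simp
        positivity
      · have hvT : v T = ∑ i ∈ S, R.indProfit i (qc i) := by
          rw [hT, hvS0 S hSne]
        rw [hvT, hsumT, Finset.sum_sub_distrib, Finset.sum_const, nsmul_eq_mul]
        have hcard : (S.card : ℝ) ≤ (n : ℝ) := by
          exact_mod_cast (Finset.card_le_univ S).trans_eq (by simp)
        nlinarith [hβpos]
    · have hT : T = S.image some := by
        ext o
        cases o with
        | none => simp [hnone]
        | some a => simp [hmemS]
      have hsumT : ∑ o ∈ T, (fun o : Option (Fin n) =>
          o.elim ((n : ℝ) * β) fun i => v {none, some i} - β) o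
          = ∑ i ∈ S, (R.indProfit i (qc i) - β) := by
        rw [hT, hsum_img]
        simp only [Option.elim, hv2]
      rcases S.eq_empty_or_nonempty with hSe | hSne
      · have hTn : T = ∅ := by rw [hT, hSe]; simp
        rw [hsumT, hSe, hTn, hv0]
        simp
      · have hvT : v T = R.coalProfit S (qS S) := by
          rw [hT, hvS S hSne]
        have h1 := hβle S hSne
        rw [hvS S hSne, hvS0 S hSne] at h1
        rw [hvT, hsumT, Finset.sum_sub_distrib, Finset.sum_const, nsmul_eq_mul]
        linarith
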